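/- For natural numbers n₁,...,n_S, Σ_{k₁=0}^{n₁} ··· Σ_{k_S=0}^{n_S} C(n₁,k₁)···C(n_S,k_S)·E(k₁,...,k_S) = (n₁+...+n_S)! / (n₁!···n_S!), where E is the block derangement count and E(0,...,0)=1. -/

import Mathlib

open Finset

/-- The number of block derangements: ways to deal the pooled cards
(player `j` originally holds `n j` cards) so that each player `j` receives
exactly `n j` cards and no player receives a card he originally held. -/
def blockDerangements (S : ℕ) (n : Fin S → ℕ) : ℕ :=
  Fintype.card {f : (Σ j : Fin S, Fin (n j)) → Fin S //
    (∀ c : Σ j : Fin S, Fin (n j), f c ≠ c.1) ∧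
    ∀ j : Fin S, Fintype.card {c : Σ j : Fin S, Fin (n j) // f c = j} = n j}

section Aux

variable {S : ℕ}


def BDgen (S : ℕ) (α : Fin S → Type) [∀ j, Fintype (α j)] [∀ j, DecidableEq (α j)]
    (m : Fin S → ℕ) : Type :=
  {f : (Σ j : Fin S, α j) → Fin S //
    (∀ c : Σ j : Fin S, α j, f c ≠ c.1) ∧
    ∀ j : Fin S, Fintype.card {c : Σ j : Fin S, α j // f c = j} = m j}

instance (S : ℕ) (α : Fin S → Type) [∀ j, Fintype (α j)] [∀ j, DecidableEq (α j)]
    (m : Fin S → ℕ) : Fintype (BDgen S α m) := by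
  unfold BDgen; infer_instance

def BDgenEquiv (α β : Fin S → Type) [∀ j, Fintype (α j)] [∀ j, DecidableEq (α j)]
    [∀ j, Fintype (β j)] [∀ j, DecidableEq (β j)] (e : ∀ j, α j ≃ β j) (m : Fin S → ℕ) :
    BDgen S α m ≃ BDgen S β m := by
  set E := Equiv.sigmaCongrRight e with hE
  have hfst : ∀ d : (Σ j : Fin S, β j), (E.symm d).1 = d.1 := by
    rintro ⟨a, b⟩; rfl
  have hfst2 : ∀ c : (Σ j : Fin S, α j), (E c).1 = c.1 := by
    rintro ⟨a, b⟩; rfl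
  refine Equiv.subtypeEquiv (Equiv.arrowCongr E (Equiv.refl _)) fun f => ?_
  simp only [Equiv.arrowCongr_apply, Equiv.coe_refl, Function.comp_def, id_eq]
  constructor
  · rintro ⟨h1, h2⟩
    refine ⟨fun d => by rw [← hfst d]; exact h1 _, fun j => ?_⟩
    rw [← h2 j]
    exact Fintype.card_congr (Equiv.subtypeEquiv E.symm fun d => Iff.rfl)
  · rintro ⟨h1, h2⟩
    refine ⟨fun c => ?_, fun j => ?_⟩
    · have := h1 (E c)
      rw [Equiv.symm_apply_apply, hfst2] at this
      exact this
    · rw [← h2 j]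
      exact Fintype.card_congr (Equiv.subtypeEquiv E fun c => by rw [Equiv.symm_apply_apply])


def FullT (S : ℕ) (n : Fin S → ℕ) : Type :=
  {f : (Σ j : Fin S, Fin (n j)) → Fin S //
    ∀ j : Fin S, Fintype.card {c : Σ j : Fin S, Fin (n j) // f c = j} = n j}

instance (S : ℕ) (n : Fin S → ℕ) : Fintype (FullT S n) := by
  unfold FullT; infer_instance

def Phi (n : Fin S → ℕ)
    (fe : Σ f : FullT S n, ∀ j : Fin S, {c : Σ i : Fin S, Fin (n i) // f.1 c = j} ≃ Fin (n j)) :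
    Equiv.Perm (Σ j : Fin S, Fin (n j)) where
  toFun c := ⟨fe.1.1 c, fe.2 (fe.1.1 c) ⟨c, rfl⟩⟩
  invFun d := ((fe.2 d.1).symm d.2).1
  left_inv c := by
    show ((fe.2 (fe.1.1 c)).symm ((fe.2 (fe.1.1 c)) ⟨c, rfl⟩)).1 = c
    rw [Equiv.symm_apply_apply]
  right_inv := by
    rintro ⟨j, x⟩
    have key : ∀ (j : Fin S) (w : {c : Σ i : Fin S, Fin (n i) // fe.1.1 c = j}),
        (⟨fe.1.1 w.1, fe.2 (fe.1.1 w.1) ⟨w.1, rfl⟩⟩ : Σ i : Fin S, Fin (n i)) = ⟨j, fe.2 j w⟩ := by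
      rintro j ⟨v, rfl⟩; rfl
    have h2 := key j ((fe.2 j).symm x)
    rw [Equiv.apply_symm_apply] at h2
    exact h2

def fiberEquiv (n : Fin S → ℕ) (g : Equiv.Perm (Σ j : Fin S, Fin (n j))) (j : Fin S) :
    {c : Σ i : Fin S, Fin (n i) // (g c).1 = j} ≃ Fin (n j) where
  toFun w := Fin.cast (congrArg n w.2) (g w.1).2
  invFun x := ⟨g.symm ⟨j, x⟩, congrArg Sigma.fst (g.apply_symm_apply ⟨j, x⟩)⟩
  left_inv := by
    rintro ⟨c, rfl⟩
    apply Subtype.ext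
    show g.symm ⟨(g c).1, Fin.cast (congrArg n rfl) (g c).2⟩ = c
    have h3 : (⟨(g c).1, Fin.cast (congrArg n rfl) (g c).2⟩ : Σ i : Fin S, Fin (n i)) = g c := rfl
    rw [h3, Equiv.symm_apply_apply]
  right_inv x := by
    have key : ∀ (d : Σ i : Fin S, Fin (n i)) (_ : d = ⟨j, x⟩) (h : d.1 = j),
        Fin.cast (congrArg n h) d.2 = x := by
      rintro d rfl h; rfl
    exact key (g (g.symm ⟨j, x⟩)) (g.apply_symm_apply ⟨j, x⟩)
      (congrArg Sigma.fst (g.apply_symm_apply ⟨j, x⟩))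

lemma Phi_bijective (n : Fin S → ℕ) : Function.Bijective (Phi n) := by
  constructor
  · rintro ⟨⟨f, hf⟩, e⟩ ⟨⟨f', hf'⟩, e'⟩ h
    have hfun : ∀ c, (⟨f c, e (f c) ⟨c, rfl⟩⟩ : Σ j : Fin S, Fin (n j)) =
        ⟨f' c, e' (f' c) ⟨c, rfl⟩⟩ := fun c => congrFun (congrArg (fun g => g.toFun) h) c
    have hff' : f = f' := funext fun c => congrArg Sigma.fst (hfun c)
    subst hff'
    have he : e = e' := by
      funext j
      apply Equiv.ext
      rintro ⟨c, hc⟩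
      subst hc
      exact eq_of_heq (Sigma.mk.inj_iff.mp (hfun c)).2
    subst he
    rfl
  · intro g
    refine ⟨⟨⟨fun c => (g c).1,
      fun j => (Fintype.card_congr (fiberEquiv n g j)).trans (Fintype.card_fin _)⟩,
      fiberEquiv n g⟩, ?_⟩
    apply Equiv.ext
    intro c
    show (⟨(g c).1, fiberEquiv n g (g c).1 ⟨c, rfl⟩⟩ : Σ i : Fin S, Fin (n i)) = g c
    rfl

lemma card_fullT (n : Fin S → ℕ) :
    Fintype.card (FullT S n) = Nat.multinomial Finset.univ n := by
  have hcard := Fintype.card_of_bijective (Phi_bijective n)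
  rw [Fintype.card_perm, Fintype.card_sigma] at hcard
  simp only [Fintype.card_pi] at hcard
  have hterm : ∀ f : FullT S n, ∀ j : Fin S,
      Fintype.card ({c : Σ i : Fin S, Fin (n i) // f.1 c = j} ≃ Fin (n j)) = (n j).factorial := by
    intro f j
    rw [Fintype.card_equiv (Fintype.equivOfCardEq (by rw [f.2 j, Fintype.card_fin])), f.2 j]
  have hsum : (∑ f : FullT S n, ∏ j : Fin S,
      Fintype.card ({c : Σ i : Fin S, Fin (n i) // f.1 c = j} ≃ Fin (n j))) =
      Fintype.card (FullT S n) * ∏ j, (n j).factorial := by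
    rw [Finset.sum_congr rfl (fun f _ => Finset.prod_congr rfl (fun j _ => hterm f j))]
    rw [Finset.sum_const, Finset.card_univ, smul_eq_mul]
  rw [hsum] at hcard
  rw [Fintype.card_sigma] at hcard
  simp only [Fintype.card_fin] at hcard
  have spec := Nat.multinomial_spec Finset.univ n
  have hpos : 0 < ∏ j, (n j).factorial := Finset.prod_pos fun j _ => Nat.factorial_pos _
  apply Nat.eq_of_mul_eq_mul_right hpos
  rw [hcard, ← spec, mul_comm]
def extendF (n : Fin S → ℕ) (s : ∀ j : Fin S, Finset (Fin (n j)))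
    (g : (Σ j : Fin S, {x : Fin (n j) // x ∈ s j}) → Fin S) : (Σ j : Fin S, Fin (n j)) → Fin S :=
  fun c => if h : c.2 ∈ s c.1 then g ⟨c.1, ⟨c.2, h⟩⟩ else c.1

lemma extendF_ne (n : Fin S → ℕ) (s : ∀ j : Fin S, Finset (Fin (n j)))
    (g : (Σ j : Fin S, {x : Fin (n j) // x ∈ s j}) → Fin S)
    (hg : ∀ d : Σ j : Fin S, {x : Fin (n j) // x ∈ s j}, g d ≠ d.1)
    (c : Σ j : Fin S, Fin (n j)) : extendF n s g c ≠ c.1 ↔ c.2 ∈ s c.1 := by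
  unfold extendF
  by_cases h : c.2 ∈ s c.1
  · rw [dif_pos h]
    exact iff_of_true (hg ⟨c.1, ⟨c.2, h⟩⟩) h
  · rw [dif_neg h]
    exact iff_of_false (fun hh => hh rfl) h

lemma card_fiber_extendF (n : Fin S → ℕ) (s : ∀ j : Fin S, Finset (Fin (n j)))
    (g : (Σ j : Fin S, {x : Fin (n j) // x ∈ s j}) → Fin S)
    (hg : ∀ d : Σ j : Fin S, {x : Fin (n j) // x ∈ s j}, g d ≠ d.1) (j : Fin S) :
    Fintype.card {c : Σ i : Fin S, Fin (n i) // extendF n s g c = j} =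
      Fintype.card {d : Σ i : Fin S, {x : Fin (n i) // x ∈ s i} // g d = j}
        + (n j - (s j).card) := by
  have hsplit : Fintype.card {c : Σ i : Fin S, Fin (n i) // extendF n s g c = j} =
      Fintype.card {c : Σ i : Fin S, Fin (n i) // extendF n s g c = j ∧ c.2 ∈ s c.1}
      + Fintype.card {c : Σ i : Fin S, Fin (n i) // extendF n s g c = j ∧ ¬ c.2 ∈ s c.1} := by
    simp only [Fintype.card_subtype]
    rw [← Finset.filter_filter, ← Finset.filter_filter]
    exact (Finset.card_filter_add_card_filter_not (fun c : Σ i : Fin S, Fin (n i) => c.2 ∈ s c.1)).symm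
  have eqA : {c : Σ i : Fin S, Fin (n i) // extendF n s g c = j ∧ c.2 ∈ s c.1} ≃
      {d : Σ i : Fin S, {x : Fin (n i) // x ∈ s i} // g d = j} :=
    { toFun := fun w => ⟨⟨w.1.1, ⟨w.1.2, w.2.2⟩⟩, by
        have h := w.2.1
        unfold extendF at h
        rwa [dif_pos w.2.2] at h⟩
      invFun := fun d => ⟨⟨d.1.1, d.1.2.1⟩, by
        refine ⟨?_, d.1.2.2⟩
        show extendF n s g ⟨d.1.1, d.1.2.1⟩ = j
        unfold extendF
        rw [dif_pos d.1.2.2]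
        exact d.2⟩
      left_inv := fun _ => rfl
      right_inv := fun _ => rfl }
  have eqB : {x : Fin (n j) // x ∉ s j} ≃
      {c : Σ i : Fin S, Fin (n i) // extendF n s g c = j ∧ ¬ c.2 ∈ s c.1} := by
    apply Equiv.ofBijective (f := fun x => ⟨⟨j, x.1⟩, by
      refine ⟨?_, x.2⟩
      show extendF n s g ⟨j, x.1⟩ = j
      unfold extendF
      rw [dif_neg x.2]⟩)
    constructor
    · rintro ⟨x, hx⟩ ⟨y, hy⟩ h
      have := congrArg (fun w => w.1) h
      simp only at this
      have h2 : x = y := by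
        have := Sigma.mk.inj_iff.mp this
        exact eq_of_heq this.2
      exact Subtype.ext h2
    · rintro ⟨⟨i, x⟩, ⟨h1, h2⟩⟩
      have hij : i = j := by
        unfold extendF at h1
        rwa [dif_neg h2] at h1
      subst hij
      exact ⟨⟨x, h2⟩, rfl⟩
  have hB : Fintype.card {c : Σ i : Fin S, Fin (n i) // extendF n s g c = j ∧ ¬ c.2 ∈ s c.1} =
      n j - (s j).card := by
    rw [← Fintype.card_congr eqB, Fintype.card_subtype_compl, Fintype.card_fin,
      Fintype.card_coe]
  rw [hsplit, Fintype.card_congr eqA, hB]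

def Psi (n : Fin S → ℕ)
    (p : Σ s : ∀ j : Fin S, Finset (Fin (n j)),
      BDgen S (fun j => {x : Fin (n j) // x ∈ s j}) (fun j => (s j).card)) : FullT S n :=
  ⟨extendF n p.1 p.2.1, by
    intro j
    rw [card_fiber_extendF n p.1 p.2.1 p.2.2.1 j, p.2.2.2 j]
    have hle : (p.1 j).card ≤ n j := by
      have := Finset.card_le_univ (p.1 j)
      rwa [Fintype.card_fin] at this
    show (fun j => (p.1 j).card) j + (n j - (p.1 j).card) = n j
    simp only
    omega⟩

lemma Psi_bijective (n : Fin S → ℕ) : Function.Bijective (Psi n) := by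
  constructor
  · rintro ⟨s, g, hg1, hg2⟩ ⟨s', g', hg1', hg2'⟩ h
    have hext : extendF n s g = extendF n s' g' := congrArg Subtype.val h
    have hss' : s = s' := by
      funext j
      ext x
      rw [← extendF_ne n s g hg1 ⟨j, x⟩, ← extendF_ne n s' g' hg1' ⟨j, x⟩, hext]
    subst hss'
    have hgg' : g = g' := by
      funext d
      have h1 : g d = extendF n s g ⟨d.1, d.2.1⟩ := by
        unfold extendF
        rw [dif_pos d.2.2]
      have h2 : g' d = extendF n s g' ⟨d.1, d.2.1⟩ := by
        unfold extendF
        rw [dif_pos d.2.2]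
      rw [h1, h2, hext]
    subst hgg'
    rfl
  · rintro ⟨f, hf⟩
    set s : ∀ j : Fin S, Finset (Fin (n j)) :=
      fun j => univ.filter (fun x => f ⟨j, x⟩ ≠ j) with hs
    set g : (Σ j : Fin S, {x : Fin (n j) // x ∈ s j}) → Fin S :=
      fun d => f ⟨d.1, d.2.1⟩ with hgdef
    have hg1 : ∀ d : Σ j : Fin S, {x : Fin (n j) // x ∈ s j}, g d ≠ d.1 := by
      intro d
      exact (Finset.mem_filter.mp d.2.2).2
    have hext : extendF n s g = f := by
      funext c
      unfold extendF
      by_cases h : c.2 ∈ s c.1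
      · rw [dif_pos h]
      · rw [dif_neg h]
        by_contra hne
        exact h (Finset.mem_filter.mpr ⟨Finset.mem_univ _, fun he => hne he.symm⟩)
    have hle : ∀ j, (s j).card ≤ n j := by
      intro j
      have := Finset.card_le_univ (s j)
      rwa [Fintype.card_fin] at this
    have hfib : ∀ j : Fin S, Fintype.card
        {d : Σ i : Fin S, {x : Fin (n i) // x ∈ s i} // g d = j} = (s j).card := by
      intro j
      have h1 := card_fiber_extendF n s g hg1 j
      rw [hext, hf j] at h1
      have := hle j
      omega
    exact ⟨⟨s, ⟨g, hg1, hfib⟩⟩, Subtype.ext hext⟩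

lemma blockDerangements_eq (k : Fin S → ℕ) :
    blockDerangements S k = Fintype.card (BDgen S (fun j => Fin (k j)) k) := rfl

lemma card_fullT_eq_sum (n : Fin S → ℕ) :
    Fintype.card (FullT S n) =
      ∑ s : (∀ j : Fin S, Finset (Fin (n j))),
        Fintype.card (BDgen S (fun j => {x : Fin (n j) // x ∈ s j}) (fun j => (s j).card)) := by
  rw [← Fintype.card_of_bijective (Psi_bijective n), Fintype.card_sigma]

lemma card_BD_subtype (n : Fin S → ℕ) (s : ∀ j : Fin S, Finset (Fin (n j))) :
    Fintype.card (BDgen S (fun j => {x : Fin (n j) // x ∈ s j}) (fun j => (s j).card)) =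
      blockDerangements S (fun j => (s j).card) := by
  rw [blockDerangements_eq]
  exact Fintype.card_congr
    (BDgenEquiv _ _ (fun j => Fintype.equivFinOfCardEq (Fintype.card_coe _)) _)

end Aux

theorem stmt13 (S : ℕ) (n : Fin S → ℕ) :
    ∑ k ∈ Fintype.piFinset (fun j => Finset.range (n j + 1)),
        (∏ j, (n j).choose (k j)) * blockDerangements S k =
      Nat.multinomial Finset.univ n := by
  rw [← card_fullT n, card_fullT_eq_sum n,
    Finset.sum_congr rfl (fun s _ => card_BD_subtype n s)]
  have hmaps : ∀ s ∈ (Finset.univ : Finset (∀ j : Fin S, Finset (Fin (n j)))),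
      (fun j => (s j).card) ∈ Fintype.piFinset (fun j => Finset.range (n j + 1)) := by
    intro s _
    rw [Fintype.mem_piFinset]
    intro j
    rw [Finset.mem_range, Nat.lt_succ_iff]
    have := Finset.card_le_univ (s j)
    rwa [Fintype.card_fin] at this
  rw [← Finset.sum_fiberwise_of_maps_to hmaps
    (fun s => blockDerangements S (fun j => (s j).card))]
  apply Finset.sum_congr rfl
  intro k hk
  have hconst : ∀ s ∈ Finset.univ.filter
      (fun s : ∀ j : Fin S, Finset (Fin (n j)) => (fun j => (s j).card) = k),
      blockDerangements S (fun j => (s j).card) = blockDerangements S k := by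
    intro s hs
    rw [Finset.mem_filter] at hs
    rw [hs.2]
  rw [Finset.sum_congr rfl hconst, Finset.sum_const, smul_eq_mul]
  congr 1
  rw [← Fintype.card_subtype]
  have e1 : {s : ∀ j : Fin S, Finset (Fin (n j)) // (fun j => (s j).card) = k} ≃
      {s : ∀ j : Fin S, Finset (Fin (n j)) // ∀ j, (s j).card = k j} :=
    Equiv.subtypeEquivRight (fun s => funext_iff)
  have e2 : {s : ∀ j : Fin S, Finset (Fin (n j)) // ∀ j, (s j).card = k j} ≃
      ∀ j : Fin S, {t : Finset (Fin (n j)) // t.card = k j} :=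
    Equiv.subtypePiEquivPi (p := fun (j : Fin S) (t : Finset (Fin (n j))) => t.card = k j)
  rw [Fintype.card_congr (e1.trans e2), Fintype.card_pi]
  apply Finset.prod_congr rfl
  intro j _
  rw [Fintype.card_finset_len, Fintype.card_fin]
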